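/- For any parking function (a_1, ..., a_{n-1}) of length n-1, there exists a unique index j (with a_1+1 < j ≤ n or j = 1, interpreted cyclically) such that the terms of (a_2,...,a_{n-1}) lying in {a_1+1, ..., j-1} number exactly j - a_1 - 2 and, when sorted increasingly, the k-th such term is at most a_1 + k. -/

import Mathlib

/-- A parking function of length `m`: values in `{1,…,m}` whose increasing
rearrangement `a'` satisfies `a'_i ≤ i` for all `i`. -/
def IsParkingFunction (m : ℕ) (a : Fin m → ℕ) : Prop :=
  (∀ k : Fin m, 1 ≤ a k ∧ a k ≤ m) ∧
    ∀ i : Fin m, ((List.ofFn a).mergeSort (· ≤ ·))[i.val]! ≤ i.val + 1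


lemma sorted_le_of_lt_countP {l : List ℕ} (hs : l.Pairwise (· ≤ ·)) {k v : ℕ}
    (hk : k < l.length) (h : k < l.countP (fun x => decide (x ≤ v))) : l[k] ≤ v := by
  induction l generalizing k with
  | nil => simp at hk
  | cons x t ih =>
    match k with
    | 0 =>
      simp only [List.getElem_cons_zero]
      by_contra hx
      push_neg at hx
      have : (x :: t).countP (fun y => decide (y ≤ v)) = 0 := by
        rw [List.countP_eq_zero]
        intro b hb
        simp only [decide_eq_true_eq]
        rcases List.mem_cons.mp hb with rfl | hb
        · omega
        · have := (List.pairwise_cons.mp hs).1 b hb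
          omega
      omega
    | k + 1 =>
      simp only [List.getElem_cons_succ]
      have hcs := List.pairwise_cons.mp hs
      apply ih hcs.2 (by simpa using hk)
      rw [List.countP_cons] at h
      have hle : (if (decide (x ≤ v)) = true then 1 else 0) ≤ 1 := by split <;> simp
      omega

lemma lt_countP_of_sorted_le {l : List ℕ} (hs : l.Pairwise (· ≤ ·)) {k v : ℕ}
    (hk : k < l.length) (h : l[k] ≤ v) : k < l.countP (fun x => decide (x ≤ v)) := by
  induction l generalizing k with
  | nil => simp at hk
  | cons x t ih =>
    have hcs := List.pairwise_cons.mp hs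
    match k with
    | 0 =>
      simp only [List.getElem_cons_zero] at h
      rw [List.countP_cons]
      simp [h]
    | k + 1 =>
      simp only [List.getElem_cons_succ] at h
      have := ih hcs.2 (by simpa using hk) h
      have hx : x ≤ v := le_trans (hcs.1 _ (t.getElem_mem _)) h
      rw [List.countP_cons]
      simp only [hx]
      simp only [decide_eq_true_eq, if_pos trivial]
      omega

theorem parking_function_splitting' (n : ℕ) (hn : 2 ≤ n) (a : Fin (n - 1) → ℕ)
    (hpf : (∀ k : Fin (n-1), 1 ≤ a k ∧ a k ≤ (n-1)) ∧
    ∀ i : Fin (n-1), ((List.ofFn a).mergeSort (· ≤ ·))[i.val]! ≤ i.val + 1) :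
    ∃! j : ℕ,
      (a ⟨0, Nat.sub_pos_of_lt hn⟩ + 1 < j ∧ j ≤ n + 1) ∧
      (Multiset.card
          (((Finset.univ.filter (fun i : Fin (n - 1) => 0 < i.val)).val.map a).filter
            (fun x => a ⟨0, Nat.sub_pos_of_lt hn⟩ + 1 ≤ x ∧ x ≤ j - 1)) = j - a ⟨0, Nat.sub_pos_of_lt hn⟩ - 2) ∧
      (∀ k : ℕ, k < j - a ⟨0, Nat.sub_pos_of_lt hn⟩ - 2 →
        (Multiset.sort
            (((Finset.univ.filter (fun i : Fin (n - 1) => 0 < i.val)).val.map a).filter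
              (fun x => a ⟨0, Nat.sub_pos_of_lt hn⟩ + 1 ≤ x ∧ x ≤ j - 1)) (· ≤ ·))[k]! ≤
          a ⟨0, Nat.sub_pos_of_lt hn⟩ + k + 1) := by
  obtain ⟨hbound, hsorted⟩ := hpf
  set c : ℕ := a ⟨0, by omega⟩ with hc
  set T : Multiset ℕ := (Finset.univ.filter (fun i : Fin (n - 1) => 0 < i.val)).val.map a with hT
  -- c bounds
  have hcb : 1 ≤ c ∧ c ≤ n - 1 := hbound ⟨0, by omega⟩
  -- the full multiset
  have hsplit : (Finset.univ.val.map a : Multiset ℕ) = T + {c} := by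
    have h1 : (Finset.univ.filter (fun i : Fin (n - 1) => ¬ 0 < i.val))
        = {(⟨0, by omega⟩ : Fin (n-1))} := by
      ext i; simp [Fin.ext_iff]
    have h2 := Multiset.filter_add_not (fun i : Fin (n-1) => 0 < i.val) Finset.univ.val
    have h3 : Multiset.map a (Multiset.filter (fun i : Fin (n-1) => ¬ 0 < i.val) Finset.univ.val)
        = {c} := by
      have h4 : Multiset.filter (fun i : Fin (n-1) => ¬ 0 < i.val) Finset.univ.val
          = (Finset.filter (fun i : Fin (n-1) => ¬ 0 < i.val) Finset.univ).val := rfl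
      rw [h4, h1]; simp [hc]
    conv_lhs => rw [← h2]
    rw [Multiset.map_add, h3]
    rfl
  -- the sorted full list
  set L : List ℕ := (List.ofFn a).mergeSort (· ≤ ·) with hL
  have hLp : List.Perm L (List.ofFn a) := List.mergeSort_perm _ _
  have hLlen : L.length = n - 1 := by rw [hLp.length_eq, List.length_ofFn]
  have hLs : L.Pairwise (· ≤ ·) := by
    have := List.pairwise_mergeSort (le := fun x y : ℕ => x ≤ y)
      (fun a b c h1 h2 => by simp at *; omega) (fun a b => by simp; omega) (List.ofFn a)
    exact this.imp (fun h => by simpa using h)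
  -- parking property as a counting bound
  have hpark : ∀ v : ℕ, v ≤ n - 1 →
      v ≤ Multiset.countP (fun x => x ≤ v) (Finset.univ.val.map a) := by
    intro v hv
    rcases Nat.eq_zero_or_pos v with rfl | hv1
    · exact Nat.zero_le _
    have hA : (Finset.univ.val.map a : Multiset ℕ) = (↑(List.ofFn a) : Multiset ℕ) := by
      rw [List.ofFn_eq_map]; rfl
    rw [hA, Multiset.coe_countP, ← hLp.countP_eq]
    have hlt : v - 1 < L.length := by omega
    have hget : L[v-1] ≤ v := by
      have := hsorted ⟨v - 1, by omega⟩
      rw [getElem!_pos L (v-1) hlt] at this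
      · simpa using (by omega : L[v-1] ≤ v - 1 + 1 → L[v-1] ≤ v) this
    have := lt_countP_of_sorted_le hLs hlt hget
    omega
  -- the counting function
  set cnt : ℕ → ℕ := fun v => Multiset.card (T.filter (fun x => c + 1 ≤ x ∧ x ≤ v)) with hcnt
  have hmono : ∀ v w : ℕ, v ≤ w → cnt v ≤ cnt w := by
    intro v w hvw
    exact Multiset.card_le_card (Multiset.monotone_filter_right T (fun b hb => ⟨hb.1, hb.2.trans hvw⟩))
  have hub : ∀ v : ℕ, cnt v ≤ n - 1 - c := by
    intro v
    have h1 : Multiset.countP (fun x => x ≤ c) (Finset.univ.val.map a)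
        + Multiset.countP (fun x : ℕ => ¬ x ≤ c) (Finset.univ.val.map a)
        = Multiset.card (Finset.univ.val.map a) := by
      rw [Multiset.countP_eq_card_filter, Multiset.countP_eq_card_filter,
        ← Multiset.card_add, Multiset.filter_add_not]
    have h2 : Multiset.card (Finset.univ.val.map a : Multiset ℕ) = n - 1 := by
      simp
    have h3 := hpark c hcb.2
    have h4 : cnt v ≤ Multiset.countP (fun x : ℕ => ¬ x ≤ c) (Finset.univ.val.map a) := by
      rw [Multiset.countP_eq_card_filter]
      apply Multiset.card_le_card
      calc T.filter (fun x => c + 1 ≤ x ∧ x ≤ v)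
          ≤ T.filter (fun x : ℕ => ¬ x ≤ c) :=
            Multiset.monotone_filter_right T (fun b hb => by omega)
        _ ≤ (Finset.univ.val.map a : Multiset ℕ).filter (fun x : ℕ => ¬ x ≤ c) := by
            rw [hsplit]
            exact Multiset.filter_le_filter _ (Multiset.le_add_right _ _)
    omega
  -- existence of the crossing point
  have hexfind : ∃ t : ℕ, cnt (c + 1 + t) ≤ t := ⟨n - 1 - c, hub _⟩
  set t0 : ℕ := Nat.find hexfind with ht0
  have ht0le : t0 ≤ n - 1 - c := Nat.find_le (hub _)
  have ht0spec : cnt (c + 1 + t0) ≤ t0 := Nat.find_spec hexfind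
  have ht0min : ∀ s, s < t0 → s + 1 ≤ cnt (c + 1 + s) := by
    intro s hs
    have := Nat.find_min hexfind hs
    omega
  have ht0eq : cnt (c + 1 + t0) = t0 := by
    rcases Nat.eq_zero_or_pos t0 with h0 | h0
    · omega
    · have h1 := ht0min (t0 - 1) (by omega)
      have h2 := hmono (c + 1 + (t0 - 1)) (c + 1 + t0) (by omega)
      omega
  -- key: counting elements ≤ w in the filtered multiset
  have hfe : ∀ w j : ℕ, c + 1 ≤ j → w ≤ j - 1 →
      Multiset.countP (fun x => x ≤ w) (T.filter (fun x => c + 1 ≤ x ∧ x ≤ j - 1)) = cnt w := by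
    intro w j hj hw
    rw [Multiset.countP_eq_card_filter, Multiset.filter_filter, hcnt]
    congr 1
    exact Multiset.filter_congr (fun x _ => by constructor <;> (intro h; constructor <;> omega))
  have e1 : c + 2 + t0 - 1 = c + 1 + t0 := by omega
  refine ⟨c + 2 + t0, ⟨⟨by omega, by omega⟩, ?_, ?_⟩, ?_⟩
  · -- cardinality condition
    rw [e1]
    show cnt (c + 1 + t0) = c + 2 + t0 - c - 2
    rw [ht0eq]
    omega
  · -- sorted condition
    intro k hk
    have hk' : k < t0 := by omega
    rw [e1]
    have hslen : (Multiset.sort (T.filter (fun x => c + 1 ≤ x ∧ x ≤ c + 1 + t0)) (· ≤ ·)).length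
        = t0 := by
      rw [Multiset.length_sort]
      exact ht0eq
    have hkl : k < (Multiset.sort (T.filter (fun x => c + 1 ≤ x ∧ x ≤ c + 1 + t0)) (· ≤ ·)).length := by
      omega
    rw [getElem!_pos (Multiset.sort (T.filter (fun x => c + 1 ≤ x ∧ x ≤ c + 1 + t0)) (· ≤ ·)) k hkl]
    apply sorted_le_of_lt_countP (Multiset.pairwise_sort _ _) hkl
    have hcp : (Multiset.sort (T.filter (fun x => c + 1 ≤ x ∧ x ≤ c + 1 + t0)) (· ≤ ·)).countP
          (fun x => decide (x ≤ c + k + 1))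
        = Multiset.countP (fun x => x ≤ c + k + 1)
            (T.filter (fun x => c + 1 ≤ x ∧ x ≤ (c + 2 + t0) - 1)) := by
      rw [e1, ← Multiset.coe_countP, Multiset.sort_eq]
    rw [hcp, hfe (c + k + 1) (c + 2 + t0) (by omega) (by omega)]
    have e2 : c + k + 1 = c + 1 + k := by omega
    rw [e2]
    have := ht0min k hk'
    omega
  · -- uniqueness
    rintro j' ⟨⟨hj1, hj2⟩, hcard, hsort⟩
    set t' : ℕ := j' - c - 2 with ht'
    have e3 : j' - 1 = c + 1 + t' := by omega
    rw [e3] at hcard hsort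
    have hcnt' : cnt (c + 1 + t') = t' := hcard
    have ht0t' : t0 ≤ t' := Nat.find_le hcnt'.le
    rcases eq_or_lt_of_le ht0t' with heq | hlt
    · omega
    · exfalso
      have hslen' : (Multiset.sort (T.filter (fun x => c + 1 ≤ x ∧ x ≤ c + 1 + t')) (· ≤ ·)).length
          = t' := by
        rw [Multiset.length_sort]
        exact hcnt'
      have hkl' : t0 < (Multiset.sort (T.filter (fun x => c + 1 ≤ x ∧ x ≤ c + 1 + t')) (· ≤ ·)).length := by
        omega
      have hs := hsort t0 (by omega)
      rw [getElem!_pos (Multiset.sort (T.filter (fun x => c + 1 ≤ x ∧ x ≤ c + 1 + t')) (· ≤ ·)) t0 hkl'] at hs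
      have hlt2 := lt_countP_of_sorted_le (Multiset.pairwise_sort _ _) hkl' hs
      have hcp' : (Multiset.sort (T.filter (fun x => c + 1 ≤ x ∧ x ≤ c + 1 + t')) (· ≤ ·)).countP
            (fun x => decide (x ≤ c + t0 + 1))
          = Multiset.countP (fun x => x ≤ c + t0 + 1)
              (T.filter (fun x => c + 1 ≤ x ∧ x ≤ (c + 2 + t') - 1)) := by
        rw [show c + 2 + t' - 1 = c + 1 + t' from by omega, ← Multiset.coe_countP, Multiset.sort_eq]
      rw [hcp', hfe (c + t0 + 1) (c + 2 + t') (by omega) (by omega)] at hlt2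
      rw [show c + t0 + 1 = c + 1 + t0 from by omega, ht0eq] at hlt2
      omega


/-- For any parking function `(a_1, …, a_{n-1})` of length `n-1`, there exists a unique
`j` with `a_1 + 1 < j ≤ n` or `j = 1` (interpreted cyclically, with `j = 1` represented
by `j = n+1`) such that the terms of `(a_2, …, a_{n-1})` lying in `{a_1+1, …, j-1}`
number exactly `j - a_1 - 2` and, when sorted increasingly, the `k`-th such term is at
most `a_1 + k`. -/
theorem parking_function_splitting (n : ℕ) (hn : 2 ≤ n) (a : Fin (n - 1) → ℕ)
    (hpf : IsParkingFunction (n - 1) a) :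
    ∃! j : ℕ,
      (a ⟨0, by omega⟩ + 1 < j ∧ j ≤ n + 1) ∧
      (Multiset.card
          (((Finset.univ.filter (fun i : Fin (n - 1) => 0 < i.val)).val.map a).filter
            (fun x => a ⟨0, by omega⟩ + 1 ≤ x ∧ x ≤ j - 1)) = j - a ⟨0, by omega⟩ - 2) ∧
      (∀ k : ℕ, k < j - a ⟨0, by omega⟩ - 2 →
        (Multiset.sort
            (((Finset.univ.filter (fun i : Fin (n - 1) => 0 < i.val)).val.map a).filter
              (fun x => a ⟨0, by omega⟩ + 1 ≤ x ∧ x ≤ j - 1)) (· ≤ ·))[k]! ≤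
          a ⟨0, by omega⟩ + k + 1) := by
  exact parking_function_splitting' n hn a hpf
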